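/- In the 2-player WLC game G_Σ with C_1 = {a_1,b_1,c_1}, C_2 = {a_2,b_2,c_2}, W = {(a_1,a_2),(a_1,b_2),(c_1,b_2),(c_1,c_2)}, player 1 has no optimal choice, b_1 is the unique surely losing choice, and after removing b_1 the choice b_2 is surely winning for player 2 in the reduced game; hence G_Σ is BCR-solvable but not IOC-solvable. -/

import Mathlib

open Classical

/-- An `n`-player win-lose coordination (WLC) game: a finite domain of choices,
nonempty pairwise disjoint choice sets `C i` for the players, and a winning
relation `W` consisting of choice profiles. -/
structure WLC (n : ℕ) where
  A : Type
  finA : Finite A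
  C : Fin n → Set A
  C_nonempty : ∀ i, (C i).Nonempty
  C_disjoint : ∀ i j, i ≠ j → Disjoint (C i) (C j)
  W : Set (Fin n → A)
  W_sub : ∀ σ ∈ W, ∀ i, σ i ∈ C i

namespace WLC

variable {n : ℕ}

/-- `σ` is a choice profile w.r.t. the choice sets `Cs`. -/
def IsProfileOn {A : Type} (Cs : Fin n → Set A) (σ : Fin n → A) : Prop :=
  ∀ i, σ i ∈ Cs i

/-- `c` is a surely winning choice of player `i` w.r.t. choice sets `Cs`
and winning relation `W`. -/
def SWinOn {A : Type} (Cs : Fin n → Set A) (W : Set (Fin n → A)) (i : Fin n) (c : A) : Prop :=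
  c ∈ Cs i ∧ ∀ σ, IsProfileOn Cs σ → σ i = c → σ ∈ W

/-- `c` is a surely losing choice of player `i` w.r.t. choice sets `Cs`
and winning relation `W`. -/
def SLoseOn {A : Type} (Cs : Fin n → Set A) (W : Set (Fin n → A)) (i : Fin n) (c : A) : Prop :=
  c ∈ Cs i ∧ ∀ σ, IsProfileOn Cs σ → σ i = c → σ ∉ W

def IsProfile (G : WLC n) (σ : Fin n → G.A) : Prop := IsProfileOn G.C σ

def SurelyWinning (G : WLC n) (i : Fin n) (c : G.A) : Prop := SWinOn G.C G.W i c

def SurelyLosing (G : WLC n) (i : Fin n) (c : G.A) : Prop := SLoseOn G.C G.W i c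

/-- The winning extension of the choice `c` of player `i`: the (sets of) tuples of
choices of the other players that complete `c` to a winning profile.  (Technically we
use full profiles whose `i`-th coordinate is irrelevant, replacing it by `c`.) -/
def winExtOn {A : Type} (Cs : Fin n → Set A) (W : Set (Fin n → A)) (i : Fin n) (c : A) :
    Set (Fin n → A) :=
  {σ | (∀ j, j ≠ i → σ j ∈ Cs j) ∧ Function.update σ i c ∈ W}

def winExt (G : WLC n) (i : Fin n) (c : G.A) : Set (Fin n → G.A) := winExtOn G.C G.W i c

end WLC

namespace WLC

variable {n : ℕ}

/-- The set of non-surely-losing choices of player `i`. -/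
def nonLosing (G : WLC n) (i : Fin n) : Set G.A :=
  {c ∈ G.C i | ¬ SurelyLosing G i c}

/-- `c` is an optimal choice of player `i`: it is at least as good as every choice of
`i`, i.e. its winning extension contains the winning extension of every choice of `i`. -/
def Optimal (G : WLC n) (i : Fin n) (c : G.A) : Prop :=
  c ∈ G.C i ∧ ∀ c' ∈ G.C i, winExt G i c' ⊆ winExt G i c

/-- The BCR-prescribed choices: in the game restricted to non-surely-losing choices,
play a surely winning choice when one exists, else any (non-surely-losing) choice. -/
noncomputable def BCRset (G : WLC n) (i : Fin n) : Set G.A :=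
  if ∃ c, SWinOn (nonLosing G) G.W i c then {c | SWinOn (nonLosing G) G.W i c}
  else nonLosing G i

/-- `G` is BCR-solvable: after removing all surely losing choices of every player,
some player has a surely winning choice, and the BCR-prescribed profiles are winning. -/
noncomputable def BCRSolvable (G : WLC n) : Prop :=
  (∃ i c, SWinOn (nonLosing G) G.W i c) ∧
  ∀ σ, (∀ i, σ i ∈ BCRset G i) → σ ∈ G.W

/-- The BIR⁺-prescribed choices: an optimal non-surely-losing choice when one exists,
else a non-surely-losing choice when one exists, else any choice. -/
noncomputable def BIRplusSet (G : WLC n) (i : Fin n) : Set G.A :=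
  if ∃ c, Optimal G i c ∧ ¬ SurelyLosing G i c then
    {c | Optimal G i c ∧ ¬ SurelyLosing G i c}
  else if ∃ c ∈ G.C i, ¬ SurelyLosing G i c then nonLosing G i
  else G.C i

/-- `G` is BIR⁺-solvable: every profile in which each player plays an optimal
non-surely-losing choice when possible (else merely a non-surely-losing choice)
is winning. -/
noncomputable def BIRplusSolvable (G : WLC n) : Prop :=
  ∀ σ, (∀ i, σ i ∈ BIRplusSet G i) → σ ∈ G.W

/-- `G` is IOC-solvable: every profile in which each player who has an optimal choice
plays one (players without optimal choices playing arbitrarily) is winning. -/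
def IOCSolvable (G : WLC n) : Prop :=
  ∀ σ, G.IsProfile σ →
    (∀ i, (∃ c, Optimal G i c) → Optimal G i (σ i)) → σ ∈ G.W

end WLC

open WLC

/-- The 2-player game `G_Σ`: choices `a₁ = (0,0)`, `b₁ = (0,1)`, `c₁ = (0,2)`,
`a₂ = (1,0)`, `b₂ = (1,1)`, `c₂ = (1,2)`;
`W = {(a₁,a₂), (a₁,b₂), (c₁,b₂), (c₁,c₂)}`. -/
def GSigma : WLC 2 where
  A := Fin 2 × Fin 3
  finA := inferInstance
  C := fun i => {a | a.1 = i}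
  C_nonempty := fun i => ⟨(i, 0), rfl⟩
  C_disjoint := fun i j h => Set.disjoint_left.mpr fun a ha hb => h (ha.symm.trans hb)
  W := {σ | (σ 0 = (0,0) ∧ σ 1 = (1,0)) ∨ (σ 0 = (0,0) ∧ σ 1 = (1,1)) ∨
            (σ 0 = (0,2) ∧ σ 1 = (1,1)) ∨ (σ 0 = (0,2) ∧ σ 1 = (1,2))}
  W_sub := by
    rintro σ (⟨h0, h1⟩ | ⟨h0, h1⟩ | ⟨h0, h1⟩ | ⟨h0, h1⟩) i <;> fin_cases i <;>
      simp [Set.mem_setOf_eq, h0, h1]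

lemma memW_iff (σ : Fin 2 → Fin 2 × Fin 3) :
    σ ∈ GSigma.W ↔ ((σ 0 = (0,0) ∧ σ 1 = (1,0)) ∨ (σ 0 = (0,0) ∧ σ 1 = (1,1)) ∨
      (σ 0 = (0,2) ∧ σ 1 = (1,1)) ∨ (σ 0 = (0,2) ∧ σ 1 = (1,2))) := Iff.rfl

lemma upd01 (σ : Fin 2 → Fin 2 × Fin 3) (c : Fin 2 × Fin 3) :
    Function.update σ 0 c 1 = σ 1 := Function.update_of_ne (by decide) _ _

lemma upd10 (σ : Fin 2 → Fin 2 × Fin 3) (c : Fin 2 × Fin 3) :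
    Function.update σ 1 c 0 = σ 0 := Function.update_of_ne (by decide) _ _

lemma memW_upd0 (σ : Fin 2 → Fin 2 × Fin 3) (c : Fin 2 × Fin 3) :
    Function.update σ 0 c ∈ GSigma.W ↔ ((c = (0,0) ∧ σ 1 = (1,0)) ∨ (c = (0,0) ∧ σ 1 = (1,1)) ∨
      (c = (0,2) ∧ σ 1 = (1,1)) ∨ (c = (0,2) ∧ σ 1 = (1,2))) := by
  rw [memW_iff, upd01, Function.update_self]

lemma memW_upd1 (σ : Fin 2 → Fin 2 × Fin 3) (c : Fin 2 × Fin 3) :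
    Function.update σ 1 c ∈ GSigma.W ↔ ((σ 0 = (0,0) ∧ c = (1,0)) ∨ (σ 0 = (0,0) ∧ c = (1,1)) ∨
      (σ 0 = (0,2) ∧ c = (1,1)) ∨ (σ 0 = (0,2) ∧ c = (1,2))) := by
  rw [memW_iff, upd10, Function.update_self]

lemma winExt0_iff (c : Fin 2 × Fin 3) (σ : Fin 2 → Fin 2 × Fin 3) :
    σ ∈ winExt GSigma 0 c ↔ (∀ j, j ≠ 0 → σ j ∈ GSigma.C j) ∧ Function.update σ 0 c ∈ GSigma.W :=
  Iff.rfl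

lemma winExt1_iff (c : Fin 2 × Fin 3) (σ : Fin 2 → Fin 2 × Fin 3) :
    σ ∈ winExt GSigma 1 c ↔ (∀ j, j ≠ 1 → σ j ∈ GSigma.C j) ∧ Function.update σ 1 c ∈ GSigma.W :=
  Iff.rfl

lemma no_opt0 : ¬ ∃ c, Optimal GSigma 0 c := by
  rintro ⟨c, hc, hsub⟩
  have hτ : (![(0,0),(1,0)] : Fin 2 → Fin 2 × Fin 3) ∈ winExt GSigma 0 (0,0) := by
    rw [winExt0_iff]
    refine ⟨fun j hj => ?_, ?_⟩
    · fin_cases j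
      · exact absurd rfl hj
      · rfl
    · rw [memW_upd0]; left; exact ⟨rfl, rfl⟩
  have hτ' : (![(0,0),(1,2)] : Fin 2 → Fin 2 × Fin 3) ∈ winExt GSigma 0 (0,2) := by
    rw [winExt0_iff]
    refine ⟨fun j hj => ?_, ?_⟩
    · fin_cases j
      · exact absurd rfl hj
      · rfl
    · rw [memW_upd0]; right; right; right; exact ⟨rfl, rfl⟩
  have h1 := hsub (0,0) rfl hτ
  have h2 := hsub (0,2) rfl hτ'
  erw [winExt0_iff, memW_upd0] at h1 h2
  have e1 : c = (0,0) := by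
    rcases h1.2 with ⟨h,_⟩|⟨h,h'⟩|⟨h,h'⟩|⟨h,h'⟩ <;> first | exact h | exact absurd h' (by decide)
  have e2 : c = (0,2) := by
    rcases h2.2 with ⟨h,h'⟩|⟨h,h'⟩|⟨h,h'⟩|⟨h,_⟩ <;> first | exact h | exact absurd h' (by decide)
  rw [e1] at e2
  exact absurd (congrArg Prod.snd e2) (by decide)

lemma sl_b1 : SurelyLosing GSigma 0 (0,1) := by
  refine ⟨rfl, fun σ _ h0 hW => ?_⟩
  erw [memW_iff] at hW
  rcases hW with ⟨h,_⟩|⟨h,_⟩|⟨h,_⟩|⟨h,_⟩ <;> rw [h0] at h <;> exact absurd h (by decide)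

lemma prof_pair (x : Fin 3) (y : Fin 3) :
    WLC.IsProfileOn GSigma.C ![((0:Fin 2),x),(1,y)] := by
  intro i; fin_cases i <;> rfl

lemma sl_unique : ∀ i c, c ∈ GSigma.C i → SurelyLosing GSigma i c → i = 0 ∧ c = (0,1) := by
  intro i c hci hsl
  rcases c with ⟨c1, c2⟩
  fin_cases i
  · have hc1 : c1 = 0 := hci
    subst hc1
    refine ⟨rfl, ?_⟩
    fin_cases c2
    · exact ((hsl.2 ![(0,0),(1,0)] (prof_pair 0 0) rfl) (Or.inl ⟨rfl, rfl⟩)).elim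
    · rfl
    · exact ((hsl.2 ![(0,2),(1,2)] (prof_pair 2 2) rfl) (Or.inr (Or.inr (Or.inr ⟨rfl, rfl⟩)))).elim
  · have hc1 : c1 = 1 := hci
    subst hc1
    exfalso
    fin_cases c2
    · exact hsl.2 ![(0,0),(1,0)] (prof_pair 0 0) rfl (Or.inl ⟨rfl, rfl⟩)
    · exact hsl.2 ![(0,0),(1,1)] (prof_pair 0 1) rfl (Or.inr (Or.inl ⟨rfl, rfl⟩))
    · exact hsl.2 ![(0,2),(1,2)] (prof_pair 2 2) rfl (Or.inr (Or.inr (Or.inr ⟨rfl, rfl⟩)))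

lemma nl0 (σ0 : Fin 2 × Fin 3) (h : σ0 ∈ nonLosing GSigma 0) : σ0 = (0,0) ∨ σ0 = (0,2) := by
  obtain ⟨hc, hnl⟩ := h
  rcases σ0 with ⟨x, y⟩
  have hx : x = 0 := hc
  subst hx
  fin_cases y
  · exact Or.inl rfl
  · exact absurd sl_b1 hnl
  · exact Or.inr rfl

lemma swin_b2 : SWinOn (nonLosing GSigma) GSigma.W 1 (1,1) := by
  constructor
  · exact ⟨rfl, fun hsl => (hsl.2 ![(0,0),(1,1)] (prof_pair 0 1) rfl) (Or.inr (Or.inl ⟨rfl, rfl⟩))⟩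
  · intro σ hp h1
    rcases nl0 (σ 0) (hp 0) with h0 | h0
    · exact Or.inr (Or.inl ⟨h0, h1⟩)
    · exact Or.inr (Or.inr (Or.inl ⟨h0, h1⟩))

lemma bcr : BCRSolvable GSigma := by
  refine ⟨⟨1, (1,1), swin_b2⟩, fun σ hB => ?_⟩
  have hnl : ∀ i, σ i ∈ nonLosing GSigma i := by
    intro i
    have h := hB i
    unfold BCRset at h
    split at h
    · exact h.1
    · exact h
  have h1 := hB 1
  unfold BCRset at h1
  rw [if_pos ⟨(1,1), swin_b2⟩] at h1
  exact h1.2 σ hnl rfl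

lemma opt1 : Optimal GSigma 1 (1,1) := by
  refine ⟨rfl, fun c' hc' σ hσ => ?_⟩
  erw [winExt1_iff, memW_upd1] at hσ ⊢
  refine ⟨hσ.1, ?_⟩
  rcases hσ.2 with ⟨h,_⟩|⟨h,_⟩|⟨h,_⟩|⟨h,_⟩
  · exact Or.inr (Or.inl ⟨h, rfl⟩)
  · exact Or.inr (Or.inl ⟨h, rfl⟩)
  · exact Or.inr (Or.inr (Or.inl ⟨h, rfl⟩))
  · exact Or.inr (Or.inr (Or.inl ⟨h, rfl⟩))

lemma not_ioc : ¬ IOCSolvable GSigma := by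
  intro hioc
  have hW := hioc ![(0,1),(1,1)] (prof_pair 1 1) ?_
  · rcases hW with ⟨h,_⟩|⟨h,_⟩|⟨h,_⟩|⟨h,_⟩ <;>
      exact absurd (congrArg Prod.snd h) (by decide)
  · intro i _
    fin_cases i
    · exact absurd ‹∃ c, Optimal GSigma 0 c› no_opt0
    · exact opt1


/-- In `G_Σ`, player `1` (index `0`) has no optimal choice, `b₁` is the
unique surely losing choice, and after removing `b₁` (i.e. in the restriction to
non-surely-losing choices) the choice `b₂` is surely winning for player `2`;
hence `G_Σ` is BCR-solvable but not IOC-solvable. -/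
theorem GSigma_bcr_solvable_not_ioc_solvable :
    (¬ ∃ c, Optimal GSigma 0 c) ∧
    SurelyLosing GSigma 0 (0,1) ∧
    (∀ i c, c ∈ GSigma.C i → SurelyLosing GSigma i c → i = 0 ∧ c = (0,1)) ∧
    SWinOn (nonLosing GSigma) GSigma.W 1 (1,1) ∧
    BCRSolvable GSigma ∧ ¬ IOCSolvable GSigma := by
  exact ⟨no_opt0, sl_b1, sl_unique, swin_b2, bcr, not_ioc⟩
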